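/- For 0 < μ < λ, the density ψ₀(t) = (λ/(t√(λμ))) e^{-(λ+μ)t} I₁(2t√(λμ)) integrates to 1 over (0,∞): ∫₀^∞ ψ₀(t) dt = 1. -/

import Mathlib

open MeasureTheory

/-- The modified Bessel function of the first kind `I₁`. -/
noncomputable def besselI1 (z : ℝ) : ℝ :=
  (z / 2) * ∑' k : ℕ, (z ^ 2 / 4) ^ k / (Nat.factorial k * Nat.factorial (k + 1))

section Aux

open Real Set Filter Finset

lemma catalan_le_four_pow (n : ℕ) : (catalan n : ℝ) ≤ 4 ^ n := by
  have h1 : catalan n ≤ n.centralBinom := by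
    calc catalan n ≤ (n + 1) * catalan n := Nat.le_mul_of_pos_left _ (Nat.succ_pos n)
      _ = n.centralBinom := succ_mul_catalan_eq_centralBinom n
  have h2 : n.centralBinom ≤ 4 ^ n := by
    have hmem : n ∈ Finset.range (2 * n + 1) := Finset.mem_range.2 (by omega)
    calc n.centralBinom = (2 * n).choose n := rfl
      _ ≤ ∑ i ∈ Finset.range (2 * n + 1), (2 * n).choose i :=
          Finset.single_le_sum (fun i _ => Nat.zero_le _) hmem
      _ = 2 ^ (2 * n) := Nat.sum_range_choose (2 * n)
      _ = 4 ^ n := by rw [pow_mul]; norm_num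
  calc (catalan n : ℝ) ≤ (n.centralBinom : ℝ) := by exact_mod_cast h1
    _ ≤ ((4 ^ n : ℕ) : ℝ) := by exact_mod_cast h2
    _ = 4 ^ n := by push_cast; ring

lemma summable_catalan_mul {x : ℝ} (hx0 : 0 ≤ x) (hx : x < 1 / 4) :
    Summable (fun k : ℕ => (catalan k : ℝ) * x ^ k) := by
  refine Summable.of_nonneg_of_le (fun k => by positivity) (fun k => ?_)
    (summable_geometric_of_lt_one (by positivity) (by linarith) (r := 4 * x))
  calc (catalan k : ℝ) * x ^ k ≤ 4 ^ k * x ^ k :=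
        mul_le_mul_of_nonneg_right (catalan_le_four_pow k) (by positivity)
    _ = (4 * x) ^ k := (mul_pow _ _ _).symm

lemma catalanGF_eq {x : ℝ} (hx0 : 0 ≤ x) (hx : x < 1 / 4) :
    (∑' k : ℕ, (catalan k : ℝ) * x ^ k)
      = 1 + x * (∑' k : ℕ, (catalan k : ℝ) * x ^ k) ^ 2 := by
  set f : ℕ → ℝ := fun k => (catalan k : ℝ) * x ^ k with hf
  have hs : Summable f := summable_catalan_mul hx0 hx
  have hnorm : Summable fun k => ‖f k‖ := by
    refine hs.congr fun k => ?_
    rw [Real.norm_eq_abs, abs_of_nonneg (by positivity)]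
  have hsq : (∑' k, f k) ^ 2 = ∑' n : ℕ, (catalan (n + 1) : ℝ) * x ^ n := by
    rw [sq, tsum_mul_tsum_eq_tsum_sum_antidiagonal_of_summable_norm hnorm hnorm]
    refine tsum_congr fun n => ?_
    have : ∀ kl ∈ Finset.HasAntidiagonal.antidiagonal n,
        f kl.1 * f kl.2 = ((catalan kl.1 * catalan kl.2 : ℕ) : ℝ) * x ^ n := by
      intro kl hkl
      have hkl' : kl.1 + kl.2 = n := Finset.HasAntidiagonal.mem_antidiagonal.1 hkl
      simp only [hf]
      push_cast
      rw [← hkl', pow_add]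
      ring
    rw [Finset.sum_congr rfl this, ← Finset.sum_mul, ← Nat.cast_sum, ← catalan_succ' n]
  rw [hsq, tsum_mul_left.symm]
  have h2 : ∀ n : ℕ, x * ((catalan (n + 1) : ℝ) * x ^ n) = f (n + 1) := by
    intro n; simp only [hf]; ring
  rw [tsum_congr h2, show tsum f = f 0 + ∑' b : ℕ, f (b + 1) from hs.tsum_eq_zero_add]
  simp [hf]

lemma catalanGF_lt_two {x : ℝ} (hx0 : 0 ≤ x) (hx : x < 1 / 4) :
    (∑' k : ℕ, (catalan k : ℝ) * x ^ k) < 2 := by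
  set g : ℝ → ℝ := fun y => ∑' k : ℕ, (catalan k : ℝ) * y ^ k with hg
  have hcont : ContinuousOn g (Icc 0 x) := by
    refine continuousOn_tsum (u := fun k => (catalan k : ℝ) * x ^ k)
      (fun k => (Continuous.continuousOn (by continuity)))
      (summable_catalan_mul hx0 hx) (fun k y hy => ?_)
    have hy0 : 0 ≤ y := hy.1
    rw [Real.norm_eq_abs, abs_of_nonneg (by positivity)]
    exact mul_le_mul_of_nonneg_left (pow_le_pow_left₀ hy0 hy.2 k) (by positivity)
  have hg0 : g 0 = 1 := by
    show (∑' k : ℕ, (catalan k : ℝ) * (0:ℝ) ^ k) = 1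
    rw [tsum_eq_single 0 (fun k hk => by simp [zero_pow hk])]
    simp
  have hne : ∀ y ∈ Icc 0 x, g y ≠ 2 := by
    intro y hy h2
    have := catalanGF_eq hy.1 (lt_of_le_of_lt hy.2 hx)
    rw [show (∑' k : ℕ, (catalan k : ℝ) * y ^ k) = g y from rfl, h2] at this
    have : y = 1 / 4 := by linarith
    linarith [hy.2]
  by_contra hge
  push_neg at hge
  have hgt : 2 < g x := lt_of_le_of_ne hge (Ne.symm (hne x ⟨hx0, le_refl x⟩))
  have : (2 : ℝ) ∈ g '' (Icc 0 x) := by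
    apply intermediate_value_Icc hx0 hcont
    rw [hg0]
    constructor <;> linarith
  obtain ⟨y, hy, hy2⟩ := this
  exact hne y hy hy2

lemma catalanGF_value {lam mu : ℝ} (hmu : 0 < mu) (hlam : mu < lam) :
    (∑' k : ℕ, (catalan k : ℝ) * (lam * mu / (lam + mu) ^ 2) ^ k) = (lam + mu) / lam := by
  have hlam0 : 0 < lam := hmu.trans hlam
  have ha : 0 < lam + mu := by linarith
  set x : ℝ := lam * mu / (lam + mu) ^ 2 with hxdef
  have hx0 : 0 ≤ x := by positivity
  have hx : x < 1 / 4 := by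
    rw [hxdef, div_lt_div_iff₀ (by positivity) (by norm_num)]
    nlinarith [sq_nonneg (lam - mu)]
  set G : ℝ := ∑' k : ℕ, (catalan k : ℝ) * x ^ k with hG
  have heq := catalanGF_eq hx0 hx
  have hlt : G < 2 := catalanGF_lt_two hx0 hx
  have hfac : x * (G - (lam + mu) / lam) * (G - (lam + mu) / mu) = 0 := by
    have hx1 : x * ((lam + mu) / lam) * ((lam + mu) / mu) = 1 := by
      rw [hxdef]; field_simp
    have hx2 : x * ((lam + mu) / lam + (lam + mu) / mu) = 1 := by
      rw [hxdef]; field_simp; ring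
    have : x * (G - (lam + mu) / lam) * (G - (lam + mu) / mu)
        = x * G ^ 2 - (x * ((lam + mu) / lam + (lam + mu) / mu)) * G
          + x * ((lam + mu) / lam) * ((lam + mu) / mu) := by ring
    rw [this, hx1, hx2]
    linarith [heq]
  have hxne : x ≠ 0 := by positivity
  have hr2 : (2 : ℝ) < (lam + mu) / mu := by
    rw [lt_div_iff₀ hmu]; linarith
  rcases mul_eq_zero.1 hfac with h | h
  · rcases mul_eq_zero.1 h with h' | h'
    · exact absurd h' hxne
    · linarith [sub_eq_zero.1 h']
  · have := sub_eq_zero.1 h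
    linarith

lemma integrableOn_pow_mul_exp {n : ℕ} {r : ℝ} (hr : 0 < r) :
    IntegrableOn (fun t : ℝ => t ^ n * Real.exp (-r * t)) (Ioi 0) := by
  apply integrable_of_isBigO_exp_neg (half_pos hr)
    (Continuous.continuousOn (by continuity))
  apply Asymptotics.IsLittleO.isBigO
  rw [Asymptotics.isLittleO_iff_tendsto (fun x hx => absurd hx (Real.exp_ne_zero _))]
  have h := tendsto_rpow_mul_exp_neg_mul_atTop_nhds_zero (n : ℝ) (r / 2) (half_pos hr)
  refine h.congr' ?_
  filter_upwards [eventually_gt_atTop (0 : ℝ)] with x hx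
  rw [Real.rpow_natCast]
  rw [eq_div_iff (Real.exp_ne_zero _)]
  rw [mul_assoc, ← Real.exp_add]
  ring_nf

lemma integral_pow_mul_exp {n : ℕ} {r : ℝ} (hr : 0 < r) :
    ∫ t in Ioi (0:ℝ), t ^ n * Real.exp (-r * t) = (Nat.factorial n : ℝ) / r ^ (n + 1) := by
  have h := Real.integral_rpow_mul_exp_neg_mul_Ioi
    (show (0:ℝ) < (n : ℝ) + 1 by positivity) hr
  rw [show ((n : ℝ) + 1) - 1 = (n : ℝ) by ring] at h
  have hcongr : ∫ t in Ioi (0:ℝ), t ^ n * Real.exp (-r * t)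
      = ∫ t in Ioi (0:ℝ), t ^ (n : ℝ) * Real.exp (-(r * t)) := by
    refine setIntegral_congr_fun measurableSet_Ioi (fun t ht => ?_)
    rw [Real.rpow_natCast, neg_mul]
  rw [hcongr, h]
  rw [show ((n : ℝ) + 1) = ((n + 1 : ℕ) : ℝ) by push_cast; ring, Real.rpow_natCast]
  push_cast
  rw [Real.Gamma_nat_eq_factorial, one_div, inv_pow]
  ring

lemma catalan_mul_factorial (k : ℕ) :
    catalan k * (Nat.factorial k * Nat.factorial (k + 1)) = Nat.factorial (2 * k) := by
  have h1 := succ_mul_catalan_eq_centralBinom k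
  have h2 := Nat.choose_mul_factorial_mul_factorial (show k ≤ 2 * k by omega)
  have h3 : 2 * k - k = k := by omega
  rw [h3] at h2
  calc catalan k * (Nat.factorial k * Nat.factorial (k + 1))
      = ((k + 1) * catalan k) * (Nat.factorial k * Nat.factorial k) := by
        rw [Nat.factorial_succ]; ring
    _ = k.centralBinom * (Nat.factorial k * Nat.factorial k) := by rw [h1]
    _ = (2 * k).choose k * (Nat.factorial k * Nat.factorial k) := rfl
    _ = Nat.factorial (2 * k) := by rw [← h2]; ring


end Aux

open Real Set Filter Finset in
/-- For `0 < μ < λ`, the first-passage density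
`ψ₀(t) = (λ/(t√(λμ))) e^{-(λ+μ)t} I₁(2t√(λμ))` integrates to 1 over `(0,∞)`. -/
theorem stmt_11 (lam mu : ℝ) (hmu : 0 < mu) (hlam : mu < lam) :
    ∫ t in Set.Ioi (0:ℝ),
      (lam / (t * Real.sqrt (lam * mu))) * Real.exp (-(lam + mu) * t) *
        besselI1 (2 * t * Real.sqrt (lam * mu)) = 1 := by
  have hlam0 : 0 < lam := hmu.trans hlam
  have ha : 0 < lam + mu := by linarith
  have hlm : 0 < lam * mu := by positivity
  set s := Real.sqrt (lam * mu) with hsdef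
  have hs : 0 < s := Real.sqrt_pos.2 hlm
  have hs2 : s ^ 2 = lam * mu := Real.sq_sqrt hlm.le
  set x : ℝ := lam * mu / (lam + mu) ^ 2 with hxdef
  have hx0 : 0 ≤ x := by positivity
  have hx : x < 1 / 4 := by
    rw [hxdef, div_lt_div_iff₀ (by positivity) (by norm_num)]
    nlinarith [sq_nonneg (lam - mu)]
  set F : ℕ → ℝ → ℝ := fun k t =>
    lam * (lam * mu) ^ k / (Nat.factorial k * Nat.factorial (k + 1))
      * (t ^ (2 * k) * Real.exp (-(lam + mu) * t)) with hF
  have hfk : ∀ k : ℕ, ((Nat.factorial k : ℝ)) ≠ 0 :=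
    fun k => Nat.cast_ne_zero.2 (Nat.factorial_ne_zero k)
  -- Step 1: rewrite the integrand as a series
  have hstep1 : ∀ t ∈ Ioi (0:ℝ),
      (lam / (t * s)) * Real.exp (-(lam + mu) * t) * besselI1 (2 * t * s)
        = ∑' k, F k t := by
    intro t ht
    have ht0 : (0:ℝ) < t := ht
    rw [besselI1]
    have h1 : (2 * t * s) ^ 2 / 4 = t ^ 2 * (lam * mu) := by
      rw [← hs2]; ring
    rw [h1]
    have h2 : lam / (t * s) * Real.exp (-(lam + mu) * t) *
        (2 * t * s / 2 * ∑' k : ℕ, (t ^ 2 * (lam * mu)) ^ k /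
          (Nat.factorial k * Nat.factorial (k + 1)))
        = (lam * Real.exp (-(lam + mu) * t)) *
          ∑' k : ℕ, (t ^ 2 * (lam * mu)) ^ k /
            (Nat.factorial k * Nat.factorial (k + 1)) := by
      field_simp
    rw [h2, ← tsum_mul_left]
    refine tsum_congr fun k => ?_
    rw [hF]
    simp only
    rw [mul_pow, ← pow_mul]
    ring
  rw [setIntegral_congr_fun measurableSet_Ioi hstep1]
  -- Integrability and values
  have hFint : ∀ k, IntegrableOn (F k) (Ioi 0) := by
    intro k
    exact (integrableOn_pow_mul_exp (n := 2 * k) ha).const_mul _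
  have hFval : ∀ k, ∫ t in Ioi (0:ℝ), F k t
      = (lam / (lam + mu)) * ((catalan k : ℝ) * x ^ k) := by
    intro k
    rw [hF]
    simp only
    rw [integral_const_mul, integral_pow_mul_exp ha]
    have hcat : ((Nat.factorial (2 * k) : ℝ))
        = (catalan k : ℝ) * (Nat.factorial k * Nat.factorial (k + 1)) := by
      exact_mod_cast congrArg (Nat.cast (R := ℝ)) (catalan_mul_factorial k).symm
    rw [hcat, hxdef]
    rw [div_pow, ← pow_mul]
    have hane : (lam + mu) ≠ 0 := ha.ne'
    field_simp
    ring
  have hFnorm : ∀ k, ∫ t in Ioi (0:ℝ), ‖F k t‖ = ∫ t in Ioi (0:ℝ), F k t := by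
    intro k
    refine setIntegral_congr_fun measurableSet_Ioi fun t ht => ?_
    rw [Real.norm_eq_abs, abs_of_nonneg]
    rw [hF]
    simp only
    have h1 : (0:ℝ) ≤ t ^ (2 * k) := by rw [pow_mul]; positivity
    have h2 : (0:ℝ) ≤ lam * (lam * mu) ^ k / (Nat.factorial k * Nat.factorial (k + 1)) := by
      positivity
    exact mul_nonneg h2 (mul_nonneg h1 (Real.exp_pos _).le)
  have hsum : Summable fun k => ∫ t in Ioi (0:ℝ), ‖F k t‖ := by
    have : (fun k => ∫ t in Ioi (0:ℝ), ‖F k t‖)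
        = fun k => (lam / (lam + mu)) * ((catalan k : ℝ) * x ^ k) := by
      funext k; rw [hFnorm k, hFval k]
    rw [this]
    exact (summable_catalan_mul hx0 hx).mul_left _
  rw [← integral_tsum_of_summable_integral_norm hFint hsum]
  rw [tsum_congr hFval, tsum_mul_left, hxdef, catalanGF_value hmu hlam]
  field_simp
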